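/- Let Λ = diag(λ₁,…,λₙ) with all λᵢ > 0, and let f : ℝⁿ → ℝ^K be measurable with each component f^i taking values in [0,1]. Define g_Λ^i(x) = E_{ε ~ U[−1,1]ⁿ}[f^i(x + Λε)]. Fix x ∈ ℝⁿ and let c_A be an index maximizing g_Λ^i(x) over i. Then for every δ ∈ ℝⁿ satisfying ‖Λ⁻¹δ‖₁ ≤ g_Λ^{c_A}(x) − max_{c ≠ c_A} g_Λ^c(x), one has g_Λ^{c_A}(x + δ) ≥ g_Λ^c(x + δ) for every c ≠ c_A. -/

import Mathlib

open MeasureTheory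
open Set

lemma icc_diff_vol (a b : ℝ) :
    volume (Icc (a-1) (a+1) \ Icc (b-1) (b+1)) ≤ ENNReal.ofReal |a - b| := by
  rcases le_total b a with h | h
  · have hsub : Icc (a-1) (a+1) \ Icc (b-1) (b+1) ⊆ Ioc (b+1) (a+1) := by
      rintro y ⟨⟨h1, h2⟩, hy⟩
      simp only [mem_Icc, not_and_or, not_le] at hy
      rcases hy with hy | hy
      · linarith
      · exact ⟨hy, h2⟩
    calc volume (Icc (a-1) (a+1) \ Icc (b-1) (b+1)) ≤ volume (Ioc (b+1) (a+1)) :=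
          measure_mono hsub
      _ = ENNReal.ofReal (a - b) := by rw [Real.volume_Ioc]; ring_nf
      _ = ENNReal.ofReal |a - b| := by rw [abs_of_nonneg (by linarith)]
  · have hsub : Icc (a-1) (a+1) \ Icc (b-1) (b+1) ⊆ Ico (a-1) (b-1) := by
      rintro y ⟨⟨h1, h2⟩, hy⟩
      simp only [mem_Icc, not_and_or, not_le] at hy
      rcases hy with hy | hy
      · exact ⟨h1, hy⟩
      · linarith
    calc volume (Icc (a-1) (a+1) \ Icc (b-1) (b+1)) ≤ volume (Ico (a-1) (b-1)) :=
          measure_mono hsub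
      _ = ENNReal.ofReal (b - a) := by rw [Real.volume_Ico]; ring_nf
      _ = ENNReal.ofReal |a - b| := by rw [abs_sub_comm, abs_of_nonneg (by linarith)]

lemma box_diff_vol (n : ℕ) (a b : Fin n → ℝ) :
    volume ((univ.pi fun j => Icc (a j - 1) (a j + 1)) \
        (univ.pi fun j => Icc (b j - 1) (b j + 1)))
      ≤ ENNReal.ofReal ((∑ i, |a i - b i|) * 2 ^ n / 2) := by
  rcases Nat.eq_zero_or_pos n with hn | hn
  · subst hn
    have h1 : (univ.pi fun j : Fin 0 => Icc (a j - 1) (a j + 1)) = (univ : Set (Fin 0 → ℝ)) := by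
      ext y; simp [Set.mem_pi]
    have h2 : (univ.pi fun j : Fin 0 => Icc (b j - 1) (b j + 1)) = (univ : Set (Fin 0 → ℝ)) := by
      ext y; simp [Set.mem_pi]
    simp [h1, h2]
  · set S : Fin n → Set (Fin n → ℝ) := fun i =>
      univ.pi (fun j => if j = i then Icc (a j - 1) (a j + 1) \ Icc (b j - 1) (b j + 1)
        else Icc (a j - 1) (a j + 1)) with hS
    have hsub : (univ.pi fun j => Icc (a j - 1) (a j + 1)) \
        (univ.pi fun j => Icc (b j - 1) (b j + 1)) ⊆ ⋃ i ∈ Finset.univ, S i := by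
      rintro y ⟨hA, hB⟩
      rw [Set.mem_pi] at hB
      push_neg at hB
      obtain ⟨i, -, hi⟩ := hB
      refine Set.mem_biUnion (Finset.mem_univ i) ?_
      rw [hS, Set.mem_pi]
      intro j _
      by_cases hj : j = i
      · subst hj; simp only [if_pos rfl]
        exact ⟨hA j (Set.mem_univ j), hi⟩
      · simp only [if_neg hj]
        exact hA j (Set.mem_univ j)
    refine le_trans (le_trans (measure_mono hsub) (measure_biUnion_finset_le _ _)) ?_
    have hvol : ∀ i, volume (S i) ≤ ENNReal.ofReal (|a i - b i| * 2 ^ (n-1)) := by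
      intro i
      rw [hS]
      rw [volume_pi_pi]
      rw [← Finset.mul_prod_erase Finset.univ _ (Finset.mem_univ i)]
      have hrest : ∏ j ∈ Finset.univ.erase i,
          volume (if j = i then Icc (a j - 1) (a j + 1) \ Icc (b j - 1) (b j + 1)
            else Icc (a j - 1) (a j + 1)) = ENNReal.ofReal 2 ^ (n - 1) := by
        rw [Finset.prod_congr rfl (fun j hj => ?_), Finset.prod_const,
          Finset.card_erase_of_mem (Finset.mem_univ i), Finset.card_univ, Fintype.card_fin]
        rw [if_neg (Finset.ne_of_mem_erase hj)]
        rw [Real.volume_Icc]; ring_nf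
      rw [hrest, if_pos rfl]
      calc volume (Icc (a i - 1) (a i + 1) \ Icc (b i - 1) (b i + 1)) * ENNReal.ofReal 2 ^ (n-1)
          ≤ ENNReal.ofReal |a i - b i| * ENNReal.ofReal 2 ^ (n-1) := by
            exact mul_le_mul_left (icc_diff_vol (a i) (b i)) _
        _ = ENNReal.ofReal (|a i - b i| * 2 ^ (n-1)) := by
            rw [← ENNReal.ofReal_pow (by norm_num), ← ENNReal.ofReal_mul (abs_nonneg _)]
    calc ∑ i, volume (S i) ≤ ∑ i, ENNReal.ofReal (|a i - b i| * 2 ^ (n-1)) :=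
          Finset.sum_le_sum (fun i _ => hvol i)
      _ = ENNReal.ofReal (∑ i, |a i - b i| * 2 ^ (n-1)) := by
          rw [ENNReal.ofReal_sum_of_nonneg (fun i _ => by positivity)]
      _ = ENNReal.ofReal ((∑ i, |a i - b i|) * 2 ^ n / 2) := by
          rw [← Finset.sum_mul]
          congr 1
          have : (2:ℝ) ^ n = 2 ^ (n-1) * 2 := by
            rw [← pow_succ, Nat.sub_add_cancel hn]
          rw [this]; ring

lemma key_shift (n : ℕ) (η : Fin n → ℝ) (F : (Fin n → ℝ) → ℝ) (hF : Measurable F)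
    (hF0 : ∀ ε, 0 ≤ F ε) (hF1 : ∀ ε, F ε ≤ 1) :
    ∫ ε in univ.pi (fun _ : Fin n => Icc (-1:ℝ) 1), F (ε + η)
      ≤ (∫ ε in univ.pi (fun _ : Fin n => Icc (-1:ℝ) 1), F ε)
        + (∑ i, |η i|) * 2 ^ n / 2 := by
  set C : Set (Fin n → ℝ) := univ.pi (fun _ => Icc (-1:ℝ) 1) with hC
  set T : Set (Fin n → ℝ) := univ.pi (fun j => Icc (η j - 1) (η j + 1)) with hT
  have hCm : MeasurableSet C := MeasurableSet.univ_pi (fun _ => measurableSet_Icc)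
  have hTm : MeasurableSet T := MeasurableSet.univ_pi (fun _ => measurableSet_Icc)
  have hTvol : volume T ≠ ⊤ := by
    rw [hT, volume_pi_pi]
    exact (ENNReal.prod_lt_top (fun i _ => by rw [Real.volume_Icc]; exact ENNReal.ofReal_lt_top)).ne
  have hCvol : volume C ≠ ⊤ := by
    rw [hC, volume_pi_pi]
    exact (ENNReal.prod_lt_top (fun i _ => by rw [Real.volume_Icc]; exact ENNReal.ofReal_lt_top)).ne
  -- integrability
  have hint : ∀ s : Set (Fin n → ℝ), MeasurableSet s → volume s ≠ ⊤ → IntegrableOn F s := by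
    intro s hs hvs
    refine Integrable.mono' (g := fun _ => (1:ℝ)) ?_ hF.aestronglyMeasurable.restrict ?_
    · exact integrableOn_const hvs
    · filter_upwards with y
      rw [Real.norm_eq_abs, abs_of_nonneg (hF0 y)]
      exact hF1 y
  -- translation
  have himg : (fun ε => ε + η) '' C = T := by
    ext y
    constructor
    · rintro ⟨e, he, rfl⟩
      rw [hT, Set.mem_pi]
      intro j _
      have := he j (Set.mem_univ j)
      simp only [mem_Icc] at this ⊢
      simp only [Pi.add_apply]
      constructor <;> linarith [this.1, this.2]
    · intro hy
      refine ⟨y - η, ?_, by funext j; simp⟩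
      rw [hC, Set.mem_pi]
      intro j _
      have := hy j (Set.mem_univ j)
      simp only [mem_Icc] at this ⊢
      simp only [Pi.sub_apply]
      constructor <;> linarith [this.1, this.2]
  have hshift : ∫ ε in C, F (ε + η) = ∫ y in T, F y := by
    rw [← himg]
    exact (MeasurePreserving.setIntegral_image_emb
      (measurePreserving_add_right volume η)
      (MeasurableEquiv.addRight η).measurableEmbedding F C).symm
  rw [hshift]
  -- decompose
  have hTsplit : ∫ y in T, F y = (∫ y in T ∩ C, F y) + ∫ y in T \ C, F y := by
    have hdisj : Disjoint (T ∩ C) (T \ C) :=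
      Set.disjoint_sdiff_right.mono_left Set.inter_subset_right
    rw [← setIntegral_union hdisj
      (hTm.diff hCm) (hint _ (hTm.inter hCm) (by
        exact ((measure_mono Set.inter_subset_left).trans_lt hTvol.lt_top).ne))
      (hint _ (hTm.diff hCm) (((measure_mono Set.diff_subset).trans_lt hTvol.lt_top).ne))]
    rw [Set.inter_union_diff]
  have hCsplit : (∫ y in T ∩ C, F y) ≤ ∫ y in C, F y := by
    rw [Set.inter_comm]
    apply setIntegral_mono_set (hint _ hCm hCvol)
    · filter_upwards with y using hF0 y
    · exact HasSubset.Subset.eventuallyLE Set.inter_subset_left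
  have hdiffbound : (∫ y in T \ C, F y) ≤ (∑ i, |η i|) * 2 ^ n / 2 := by
    have h1 : (∫ y in T \ C, F y) ≤ ∫ _ in T \ C, (1:ℝ) := by
      apply setIntegral_mono_on
        (hint _ (hTm.diff hCm) (((measure_mono Set.diff_subset).trans_lt hTvol.lt_top).ne))
        (integrableOn_const (((measure_mono Set.diff_subset).trans_lt hTvol.lt_top)).ne)
        (hTm.diff hCm)
      intro y _; exact hF1 y
    rw [setIntegral_const, smul_eq_mul, mul_one] at h1
    refine h1.trans ?_
    have hvolb : volume (T \ C) ≤ ENNReal.ofReal ((∑ i, |η i - 0|) * 2 ^ n / 2) := by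
      have := box_diff_vol n η 0
      simpa [hT, hC] using this
    simp only [sub_zero] at hvolb
    refine ENNReal.toReal_le_of_le_ofReal (by positivity) hvolb
  linarith [hTsplit, hCsplit, hdiffbound]


/-- generalized cross-polytope certificate for uniform-smoothed
classifiers: the top class `cA` at `x` is preserved for every `δ` with
`‖Λ⁻¹δ‖₁ ≤ g^{cA}(x) − max_{c ≠ cA} g^c(x)`. -/
theorem uniform_smoothing_cross_polytope_certificate (n K : ℕ)
    (lam : Fin n → ℝ) (hlam : ∀ i, 0 < lam i)
    (f : (Fin n → ℝ) → Fin K → ℝ) (hf : Measurable f)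
    (hf01 : ∀ v i, f v i ∈ Set.Icc (0:ℝ) 1)
    (gL : (Fin n → ℝ) → Fin K → ℝ)
    (hgL : ∀ x i, gL x i = ((2 : ℝ) ^ n)⁻¹ *
      ∫ ε in Set.univ.pi (fun _ : Fin n => Set.Icc (-1 : ℝ) 1),
        f (x + fun j => lam j * ε j) i)
    (x : Fin n → ℝ) (cA : Fin K) (hcA : ∀ i, gL x i ≤ gL x cA)
    (hne : (Finset.univ.erase cA).Nonempty)
    (δ : Fin n → ℝ)
    (hδ : ∑ i, |δ i / lam i| ≤
      gL x cA - (Finset.univ.erase cA).sup' hne (fun c => gL x c)) :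
    ∀ c, c ≠ cA → gL (x + δ) c ≤ gL (x + δ) cA := by
  intro c hc
  set η : Fin n → ℝ := fun j => δ j / lam j with hη
  set S : ℝ := ∑ i, |η i| with hSdef
  set F : Fin K → (Fin n → ℝ) → ℝ := fun i ε => f (x + fun j => lam j * ε j) i with hFdef
  have hA : Measurable (fun ε : Fin n → ℝ => x + fun j => lam j * ε j) :=
    measurable_const.add
      (measurable_pi_lambda _ fun j => (measurable_pi_apply (X := fun _ : Fin n => ℝ) j).const_mul (lam j))
  have hFm : ∀ i, Measurable (F i) := fun i =>
    (measurable_pi_apply i).comp (hf.comp hA)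
  have hF0 : ∀ i ε, 0 ≤ F i ε := fun i ε => (hf01 _ i).1
  have hF1 : ∀ i ε, F i ε ≤ 1 := fun i ε => (hf01 _ i).2
  -- rewrite shifted classifier
  have hrw : ∀ (i : Fin K) (ε : Fin n → ℝ),
      f ((x + δ) + fun j => lam j * ε j) i = F i (ε + η) := by
    intro i ε
    have : ((x + δ) + fun j => lam j * ε j) = x + fun j => lam j * ((ε + η) j) := by
      funext j
      have h0 : lam j ≠ 0 := (hlam j).ne'
      simp only [Pi.add_apply, hη]
      field_simp
      ring
    rw [this, hFdef]
  have hκpos : (0:ℝ) < ((2 : ℝ) ^ n)⁻¹ := by positivity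
  -- key bounds
  have hkey : ∀ i : Fin K,
      (∫ ε in Set.univ.pi (fun _ : Fin n => Set.Icc (-1 : ℝ) 1), F i (ε + η))
        ≤ (∫ ε in Set.univ.pi (fun _ : Fin n => Set.Icc (-1 : ℝ) 1), F i ε)
          + S * 2 ^ n / 2 :=
    fun i => key_shift n η (F i) (hFm i) (hF0 i) (hF1 i)
  have hkey' : ∀ i : Fin K,
      (∫ ε in Set.univ.pi (fun _ : Fin n => Set.Icc (-1 : ℝ) 1), F i ε)
        ≤ (∫ ε in Set.univ.pi (fun _ : Fin n => Set.Icc (-1 : ℝ) 1), F i (ε + η))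
          + S * 2 ^ n / 2 := by
    intro i
    have h := key_shift n (-η) (fun ε => F i (ε + η))
      ((hFm i).comp (measurable_id.add_const η))
      (fun ε => hF0 i _) (fun ε => hF1 i _)
    have h1 : ∀ ε : Fin n → ℝ, ε + -η + η = ε := by intro ε; abel
    have h2 : (∑ j, |(-η) j|) = S := by
      rw [hSdef]; exact Finset.sum_congr rfl (fun j _ => by simp)
    simp only [h1, h2] at h
    exact h
  -- translate to gL
  have hgc : gL (x + δ) c ≤ gL x c + S / 2 := by
    rw [hgL, hgL]
    have : (∫ ε in Set.univ.pi (fun _ : Fin n => Set.Icc (-1 : ℝ) 1),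
        f ((x + δ) + fun j => lam j * ε j) c)
        = ∫ ε in Set.univ.pi (fun _ : Fin n => Set.Icc (-1 : ℝ) 1), F c (ε + η) := by
      exact integral_congr_ae (Filter.Eventually.of_forall fun ε => hrw c ε)
    rw [this]
    have := hkey c
    have h2n : (2:ℝ) ^ n ≠ 0 := by positivity
    calc ((2 : ℝ) ^ n)⁻¹ * ∫ ε in Set.univ.pi (fun _ : Fin n => Set.Icc (-1 : ℝ) 1), F c (ε + η)
        ≤ ((2 : ℝ) ^ n)⁻¹ * ((∫ ε in Set.univ.pi (fun _ : Fin n => Set.Icc (-1 : ℝ) 1), F c ε)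
            + S * 2 ^ n / 2) := by
          exact mul_le_mul_of_nonneg_left (hkey c) hκpos.le
      _ = ((2 : ℝ) ^ n)⁻¹ * (∫ ε in Set.univ.pi (fun _ : Fin n => Set.Icc (-1 : ℝ) 1), F c ε)
            + S / 2 := by field_simp <;> ring
  have hgcA : gL x cA - S / 2 ≤ gL (x + δ) cA := by
    rw [hgL, hgL]
    have heq : (∫ ε in Set.univ.pi (fun _ : Fin n => Set.Icc (-1 : ℝ) 1),
        f ((x + δ) + fun j => lam j * ε j) cA)
        = ∫ ε in Set.univ.pi (fun _ : Fin n => Set.Icc (-1 : ℝ) 1), F cA (ε + η) := by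
      exact integral_congr_ae (Filter.Eventually.of_forall fun ε => hrw cA ε)
    rw [heq]
    have h2n : (2:ℝ) ^ n ≠ 0 := by positivity
    have := mul_le_mul_of_nonneg_left (hkey' cA) hκpos.le
    have hexp : ((2 : ℝ) ^ n)⁻¹ * ((∫ ε in Set.univ.pi (fun _ : Fin n => Set.Icc (-1 : ℝ) 1),
        F cA (ε + η)) + S * 2 ^ n / 2)
        = ((2 : ℝ) ^ n)⁻¹ * (∫ ε in Set.univ.pi (fun _ : Fin n => Set.Icc (-1 : ℝ) 1),
            F cA (ε + η)) + S / 2 := by field_simp <;> ring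
    rw [hexp] at this
    linarith
  -- gap
  have hsup : gL x c ≤ (Finset.univ.erase cA).sup' hne (fun c => gL x c) :=
    Finset.le_sup' _ (Finset.mem_erase.mpr ⟨hc, Finset.mem_univ c⟩)
  have hgap : S ≤ gL x cA - gL x c := by
    rw [hSdef, hη] at *
    linarith [hδ, hsup]
  linarith [hgc, hgcA, hgap]
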